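/- Let M be a paving matroid of rank d ≥ 2 on ground set [n], with E the collection of its dependent hyperplanes, and let x ∈ [n] not be a coloop. Then the collection of dependent hyperplanes of the deletion M − x equals {H : H ∈ E, x ∉ H} ∪ {H \ {x} : H ∈ E, x ∈ H, |H| > d}. -/

import Mathlib

open Set

/-- A hyperplane of a matroid: a maximal proper flat. -/
def Matroid.IsHyperplane' {α : Type*} (M : Matroid α) (H : Set α) : Prop :=
  M.IsFlat H ∧ H ≠ M.E ∧ ∀ F, M.IsFlat F → H ⊂ F → F = M.E

/-- The deletion of a single element: restriction to the complement. -/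
noncomputable def Matroid.deleteElem' {α : Type*} (M : Matroid α) (x : α) : Matroid α :=
  M.restrict (M.E \ {x})

namespace StmtAux

open Matroid

variable {α : Type*}

lemma flat_closure (M : Matroid α) (X : Set α) : M.IsFlat (M.closure X) := by
  rw [Matroid.closure_def, sInter_eq_iInter]
  haveI : Nonempty {F // F ∈ {F | M.IsFlat F ∧ X ∩ M.E ⊆ F}} :=
    ⟨⟨M.E, M.ground_isFlat, inter_subset_right⟩⟩
  exact Matroid.IsFlat.iInter fun F => F.2.1

lemma restrict_closure (M : Matroid α) {R X : Set α} (hR : R ⊆ M.E) (hX : X ⊆ R) :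
    (M ↾ R).closure X = M.closure X ∩ R := by
  obtain ⟨I, hI⟩ := (M ↾ R).exists_isBasis X (by simpa)
  have hIM : M.IsBasis I X := ((Matroid.isBasis_restrict_iff hR).1 hI).1
  have hIind : M.Indep I := hIM.indep
  have hIind' : (M ↾ R).Indep I := hI.indep
  rw [← hI.closure_eq_closure, ← hIM.closure_eq_closure]
  ext e
  constructor
  · intro he
    have heR : e ∈ R := (M ↾ R).closure_subset_ground I he
    rw [hIind'.mem_closure_iff] at he
    refine ⟨?_, heR⟩
    rw [hIind.mem_closure_iff]
    rcases he with h | h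
    · rw [Matroid.restrict_dep_iff] at h
      exact Or.inl ⟨h.1, h.2.trans hR⟩
    · exact Or.inr h
  · rintro ⟨he, heR⟩
    rw [hIind.mem_closure_iff] at he
    rw [hIind'.mem_closure_iff]
    rcases he with h | h
    · refine Or.inl ?_
      rw [Matroid.restrict_dep_iff]
      exact ⟨h.1, insert_subset heR (hIM.subset.trans hX)⟩
    · exact Or.inr h

variable [Finite α] {M : Matroid α} {d : ℕ}

lemma base_of_indep_ncard (hrank : ∀ B, M.IsBase B → B.ncard = d)
    {I : Set α} (hI : M.Indep I) (hc : d ≤ I.ncard) : M.IsBase I := by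
  obtain ⟨B, hB, hIB⟩ := hI.exists_isBase_superset
  have hIBeq : I = B :=
    Set.eq_of_subset_of_ncard_le hIB (by rw [hrank B hB]; exact hc) (Set.toFinite B)
  rwa [hIBeq]

lemma hyp_closure_indep (hd : 2 ≤ d) (hrank : ∀ B, M.IsBase B → B.ncard = d)
    {I : Set α} (hI : M.Indep I) (hc : I.ncard = d - 1) :
    M.IsHyperplane' (M.closure I) := by
  refine ⟨flat_closure M I, ?_, ?_⟩
  · intro h
    have hB : M.IsBase I := hI.isBase_of_spanning ⟨h, hI.subset_ground⟩
    have := hrank I hB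
    omega
  · intro F hF hss
    obtain ⟨e, heF, hecl⟩ := exists_of_ssubset hss
    have heE : e ∈ M.E := hF.subset_ground heF
    have heI : e ∉ I := fun h => hecl (M.subset_closure I hI.subset_ground h)
    have hins : M.Indep (insert e I) := by
      rw [hI.insert_indep_iff_of_notMem heI]
      exact ⟨heE, hecl⟩
    have hbase : M.IsBase (insert e I) :=
      base_of_indep_ncard hrank hins (by rw [Set.ncard_insert_of_notMem heI]; omega)
    refine subset_antisymm hF.subset_ground ?_
    calc M.E = M.closure (insert e I) := hbase.closure_eq.symm
      _ ⊆ M.closure F :=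
        M.closure_subset_closure (insert_subset heF ((M.subset_closure I hI.subset_ground).trans
          hss.subset))
      _ = F := hF.closure

lemma hyp_closure_dep (hd : 2 ≤ d) (hrank : ∀ B, M.IsBase B → B.ncard = d)
    (hpaving : ∀ D, M.Dep D → d ≤ D.ncard)
    {X : Set α} (hX : M.Dep X) (hne : M.closure X ≠ M.E) :
    M.IsHyperplane' (M.closure X) := by
  obtain ⟨I, hI⟩ := M.exists_isBasis X hX.subset_ground
  have hIX : I ⊆ X := hI.subset
  have hIind : M.Indep I := hI.indep
  have hInX : I ≠ X := fun h => hX.not_indep (h ▸ hIind)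
  obtain ⟨e, heX, heI⟩ := exists_of_ssubset (hIX.ssubset_of_ne hInX)
  have hdep : M.Dep (insert e I) := by
    have hecl : e ∈ M.closure I := hI.subset_closure heX
    rw [hIind.mem_closure_iff] at hecl
    tauto
  have hcard : d - 1 ≤ I.ncard := by
    have := hpaving _ hdep
    rw [Set.ncard_insert_of_notMem heI] at this
    omega
  obtain ⟨J, hJI, hJcard⟩ := Set.exists_subset_card_eq hcard
  have hJhyp := hyp_closure_indep hd hrank (hIind.subset hJI) hJcard
  have hsub : M.closure J ⊆ M.closure X := M.closure_subset_closure (hJI.trans hIX)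
  rcases eq_or_ne (M.closure J) (M.closure X) with h | h
  · rwa [← h]
  · exact absurd (hJhyp.2.2 _ (flat_closure M X) (hsub.ssubset_of_ne h)) hne

end StmtAux

open StmtAux Matroid

/-- For a paving matroid `M` of rank `d ≥ 2` on `[n]` with `x` not a coloop, the
dependent hyperplanes of `M − x` are the dependent hyperplanes of `M` avoiding `x`
together with the sets `H \ {x}` for large dependent hyperplanes `H` containing `x`. -/
theorem stmt_8 {n d : ℕ} (M : Matroid (Fin n)) (hE : M.E = Set.univ) (hd : 2 ≤ d)
    (hrank : ∀ B, M.IsBase B → B.ncard = d)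
    (hpaving : ∀ D, M.Dep D → d ≤ D.ncard)
    (E : Set (Set (Fin n))) (hEdef : E = {H | M.IsHyperplane' H ∧ M.Dep H})
    (x : Fin n) (hx : ¬ ∀ B, M.IsBase B → x ∈ B) :
    {H | (M.deleteElem' x).IsHyperplane' H ∧ (M.deleteElem' x).Dep H} =
      {H | H ∈ E ∧ x ∉ H} ∪ {H' | ∃ H ∈ E, x ∈ H ∧ d < H.ncard ∧ H' = H \ {x}} := by
  have hM' : M.deleteElem' x = M ↾ (M.E \ {x}) := rfl
  set R := M.E \ {x} with hR
  have hRE : R ⊆ M.E := diff_subset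
  have hxE : x ∈ M.E := by rw [hE]; exact mem_univ x
  have hcl : ∀ X ⊆ R, (M ↾ R).closure X = M.closure X ∩ R :=
    fun X hX => restrict_closure M hRE hX
  have hground : (M ↾ R).E = R := rfl
  push_neg at hx
  obtain ⟨B, hB, hxB⟩ := hx
  ext H'
  simp only [mem_setOf_eq, mem_union, hEdef, hM']
  constructor
  · rintro ⟨⟨hFlat, hne, hmax⟩, hdep⟩
    have hH'R : H' ⊆ R := hFlat.subset_ground
    have hxH' : x ∉ H' := fun h => (hH'R h).2 rfl
    rw [Matroid.restrict_dep_iff] at hdep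
    have hdepM : M.Dep H' := ⟨hdep.1, hH'R.trans hRE⟩
    have hclH' : M.closure H' ∩ R = H' := by rw [← hcl _ hH'R]; exact hFlat.closure
    have hclne : M.closure H' ≠ M.E := by
      intro h
      rw [h, inter_eq_self_of_subset_right hRE] at hclH'
      exact hne (by rw [hground, ← hclH'])
    have hHhyp : M.IsHyperplane' (M.closure H') :=
      hyp_closure_dep hd hrank hpaving hdepM hclne
    have hHdep : M.Dep (M.closure H') :=
      hdepM.superset (M.subset_closure H' hdepM.subset_ground) (M.closure_subset_ground H')
    have hH'eq : H' = M.closure H' \ {x} := by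
      conv_lhs => rw [← hclH']
      rw [hR, ← inter_diff_assoc, inter_eq_self_of_subset_left (M.closure_subset_ground H')]
    by_cases hxH : x ∈ M.closure H'
    · refine Or.inr ⟨M.closure H', ⟨hHhyp, hHdep⟩, hxH, ?_, hH'eq⟩
      have h1 : d ≤ H'.ncard := hpaving _ hdepM
      have h2 : (M.closure H' \ {x}).ncard + 1 = (M.closure H').ncard :=
        Set.ncard_diff_singleton_add_one hxH (Set.toFinite _)
      rw [← hH'eq] at h2
      omega
    · refine Or.inl ⟨?_, hxH'⟩
      have heq : H' = M.closure H' := by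
        conv_lhs => rw [hH'eq]
        rw [diff_singleton_eq_self hxH]
      exact ⟨by rw [heq]; exact hHhyp, by rw [heq]; exact hHdep⟩
  · rintro (⟨⟨⟨hFlat, hne, hmax⟩, hdep⟩, hxH⟩ | ⟨H, ⟨⟨hFlat, hne, hmax⟩, hdep⟩, hxH, hcard, rfl⟩)
    · -- Case A : H' is a dependent hyperplane of M avoiding x
      have hsub : H' ⊆ R := subset_diff_singleton hFlat.subset_ground hxH
      have hflat' : (M ↾ R).IsFlat H' := by
        have h := flat_closure (M ↾ R) H'
        rwa [hcl _ hsub, hFlat.closure, inter_eq_self_of_subset_left hsub] at h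
      refine ⟨⟨hflat', ?_, ?_⟩, ?_⟩
      · intro h
        rw [hground] at h
        have hBH : B ⊆ H' := h ▸ subset_diff_singleton hB.subset_ground hxB
        have : M.E ⊆ H' := by
          calc M.E = M.closure B := hB.closure_eq.symm
            _ ⊆ M.closure H' := M.closure_subset_closure hBH
            _ = H' := hFlat.closure
        exact hxH (this hxE)
      · intro F hF hss
        have hFR : F ⊆ R := hF.subset_ground
        obtain ⟨e, heF, heH⟩ := exists_of_ssubset hss
        have hssM : H' ⊂ M.closure F := by
          refine (hss.subset.trans (M.subset_closure F (hFR.trans hRE))).ssubset_of_ne ?_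
          intro h
          exact heH (h ▸ M.subset_closure F (hFR.trans hRE) heF)
        have hclF : M.closure F = M.E := hmax _ (flat_closure M F) hssM
        rw [hground]
        calc F = (M ↾ R).closure F := hF.closure.symm
          _ = M.closure F ∩ R := hcl _ hFR
          _ = M.E ∩ R := by rw [hclF]
          _ = R := inter_eq_self_of_subset_right hRE
      · rw [Matroid.restrict_dep_iff]
        exact ⟨hdep.1, hsub⟩
    · -- Case B : H' = H \ {x} for a large dependent hyperplane H containing x
      have hHE : H ⊆ M.E := hFlat.subset_ground
      have hsub : H \ {x} ⊆ R := diff_subset_diff_left hHE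
      have hdepM : M.Dep (H \ {x}) := by
        refine ⟨fun hind => ?_, hsub.trans hRE⟩
        have hc : d ≤ (H \ {x}).ncard := by
          have := Set.ncard_diff_singleton_add_one hxH (Set.toFinite H)
          omega
        have hbase : M.IsBase (H \ {x}) := base_of_indep_ncard hrank hind hc
        have : M.E ⊆ H := by
          calc M.E = M.closure (H \ {x}) := hbase.closure_eq.symm
            _ ⊆ M.closure H := M.closure_subset_closure diff_subset
            _ = H := hFlat.closure
        exact hne (hHE.antisymm this)
      have hclH' : M.closure (H \ {x}) = H := by
        have hsubH : M.closure (H \ {x}) ⊆ H := by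
          calc M.closure (H \ {x}) ⊆ M.closure H := M.closure_subset_closure diff_subset
            _ = H := hFlat.closure
        have hclne : M.closure (H \ {x}) ≠ M.E := by
          intro h
          exact hne (hHE.antisymm (h ▸ hsubH))
        have hhyp := hyp_closure_dep hd hrank hpaving hdepM hclne
        rcases eq_or_ne (M.closure (H \ {x})) H with h | h
        · exact h
        · exact absurd (hhyp.2.2 _ hFlat (hsubH.ssubset_of_ne h)) hne
      have hflat' : (M ↾ R).IsFlat (H \ {x}) := by
        have h := flat_closure (M ↾ R) (H \ {x})
        rwa [hcl _ hsub, hclH', hR, ← inter_diff_assoc,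
          inter_eq_self_of_subset_left hHE] at h
      refine ⟨⟨hflat', ?_, ?_⟩, ?_⟩
      · intro h
        rw [hground, hR] at h
        have : M.E ⊆ H := fun e he => by
          by_cases hex : e = x
          · exact hex ▸ hxH
          · exact ((h ▸ (⟨he, hex⟩ : e ∈ M.E \ {x})) : e ∈ H \ {x}).1
        exact hne (hHE.antisymm this)
      · intro F hF hss
        have hFR : F ⊆ R := hF.subset_ground
        obtain ⟨e, heF, heH⟩ := exists_of_ssubset hss
        have heH' : e ∉ H := by
          intro h
          exact heH ⟨h, (hFR heF).2⟩
        have hssM : H ⊂ M.closure F := by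
          refine (hclH' ▸ M.closure_subset_closure hss.subset).ssubset_of_ne ?_
          intro h
          exact heH' (h ▸ M.subset_closure F (hFR.trans hRE) heF)
        have hclF : M.closure F = M.E := hmax _ (flat_closure M F) hssM
        rw [hground]
        calc F = (M ↾ R).closure F := hF.closure.symm
          _ = M.closure F ∩ R := hcl _ hFR
          _ = M.E ∩ R := by rw [hclF]
          _ = R := inter_eq_self_of_subset_right hRE
      · rw [Matroid.restrict_dep_iff]
        exact ⟨hdepM.1, hsub⟩
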